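/- Let f : ℝ² → ℝ be a C² function whose gradient decays uniformly faster than 1/r, i.e., r·‖∇f(r,θ)‖ → 0 uniformly in θ as r → ∞. For unit vectors X, Y ∈ S¹ define the normal curvature k(p,X) := f_{XX}(p) / ((1 + f_X(p)²)·√(1 + ‖∇f(p)‖²)). Then lim_{r→∞} ∫_{B_r} (k(p,X) − k(p,Y))·(1 + f_X(p)²)·(1 + f_Y(p)²) dA_p = 0, where dA_p = √(1 + ‖∇f(p)‖²) dx dy. -/

import Mathlib

set_option maxHeartbeats 1000000

open MeasureTheory Filter Real

/-- The normal curvature of the graph of `f` above `p` in the direction `X`: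
`k(p,X) = f_{XX} / ((1 + f_X²) √(1 + ‖∇f‖²))`, where `‖∇f‖² = f₁² + f₂²`. -/
noncomputable def normalCurv (f : ℝ × ℝ → ℝ) (p X : ℝ × ℝ) : ℝ :=
  fderiv ℝ (fun q => fderiv ℝ f q X) p X /
    ((1 + (fderiv ℝ f p X) ^ 2) *
      Real.sqrt (1 + ((fderiv ℝ f p (1, 0)) ^ 2 + (fderiv ℝ f p (0, 1)) ^ 2)))

noncomputable def gfun (f : ℝ × ℝ → ℝ) (X Y p : ℝ × ℝ) : ℝ :=
  fderiv ℝ f p X * (1 + fderiv ℝ f p Y * fderiv ℝ f p Y)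

noncomputable def gder (f : ℝ × ℝ → ℝ) (X Y p : ℝ × ℝ) : ℝ × ℝ →L[ℝ] ℝ :=
  fderiv ℝ f p X •
      (fderiv ℝ f p Y • (fderiv ℝ (fderiv ℝ f) p).flip Y +
        fderiv ℝ f p Y • (fderiv ℝ (fderiv ℝ f) p).flip Y) +
    (1 + fderiv ℝ f p Y * fderiv ℝ f p Y) • (fderiv ℝ (fderiv ℝ f) p).flip X

lemma hasFDerivAt_clm_app {f : ℝ × ℝ → ℝ} (hf : ContDiff ℝ 2 f) (V p : ℝ × ℝ) :
    HasFDerivAt (fun q => fderiv ℝ f q V) ((fderiv ℝ (fderiv ℝ f) p).flip V) p := by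
  have hF : ContDiff ℝ 1 (fderiv ℝ f) := hf.fderiv_right (by norm_num)
  have hFd : HasFDerivAt (fderiv ℝ f) (fderiv ℝ (fderiv ℝ f) p) p :=
    (hF.differentiable one_ne_zero p).hasFDerivAt
  simpa using hFd.clm_apply (hasFDerivAt_const V p)

lemma hasFDerivAt_gfun {f : ℝ × ℝ → ℝ} (hf : ContDiff ℝ 2 f) (X Y p : ℝ × ℝ) :
    HasFDerivAt (gfun f X Y) (gder f X Y p) p := by
  have ha := hasFDerivAt_clm_app hf X p
  have hb := hasFDerivAt_clm_app hf Y p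
  exact ha.mul ((hb.mul hb).const_add 1)

lemma gder_apply (f : ℝ × ℝ → ℝ) (X Y p v : ℝ × ℝ) :
    gder f X Y p v =
      fderiv ℝ f p X *
          (fderiv ℝ f p Y * fderiv ℝ (fderiv ℝ f) p v Y +
            fderiv ℝ f p Y * fderiv ℝ (fderiv ℝ f) p v Y) +
        (1 + fderiv ℝ f p Y * fderiv ℝ f p Y) * fderiv ℝ (fderiv ℝ f) p v X := by
  simp [gder]; ring

lemma symm2 {f : ℝ × ℝ → ℝ} (hf : ContDiff ℝ 2 f) (p v w : ℝ × ℝ) :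
    fderiv ℝ (fderiv ℝ f) p v w = fderiv ℝ (fderiv ℝ f) p w v := by
  have hF : ContDiff ℝ 1 (fderiv ℝ f) := hf.fderiv_right (by norm_num)
  exact second_derivative_symmetric
    (fun y => (hf.differentiable two_ne_zero y).hasFDerivAt)
    ((hF.differentiable one_ne_zero p).hasFDerivAt) v w

lemma clm_decomp (T : ℝ × ℝ →L[ℝ] ℝ) (X : ℝ × ℝ) :
    T X = X.1 * T (1, 0) + X.2 * T (0, 1) := by
  have hX' : X.1 • ((1:ℝ), (0:ℝ)) + X.2 • ((0:ℝ), (1:ℝ)) = X := by ext <;> simp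
  calc T X = T (X.1 • ((1:ℝ), (0:ℝ)) + X.2 • ((0:ℝ), (1:ℝ))) := by rw [hX']
    _ = X.1 * T (1, 0) + X.2 * T (0, 1) := by
        simp only [map_add, ContinuousLinearMap.map_smul, smul_eq_mul]

lemma divergence_identity {f : ℝ × ℝ → ℝ} (hf : ContDiff ℝ 2 f) (X Y p : ℝ × ℝ) :
    (X.1 • gder f X Y p - Y.1 • gder f Y X p) (1, 0) +
      (X.2 • gder f X Y p - Y.2 • gder f Y X p) (0, 1) =
      fderiv ℝ (fderiv ℝ f) p X X * (1 + fderiv ℝ f p Y * fderiv ℝ f p Y) -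
        fderiv ℝ (fderiv ℝ f) p Y Y * (1 + fderiv ℝ f p X * fderiv ℝ f p X) := by
  have d1 := clm_decomp (gder f X Y p) X
  have d2 := clm_decomp (gder f Y X p) Y
  have main : gder f X Y p X - gder f Y X p Y =
      fderiv ℝ (fderiv ℝ f) p X X * (1 + fderiv ℝ f p Y * fderiv ℝ f p Y) -
        fderiv ℝ (fderiv ℝ f) p Y Y * (1 + fderiv ℝ f p X * fderiv ℝ f p X) := by
    rw [gder_apply, gder_apply, symm2 hf p Y X]; ring
  simp only [ContinuousLinearMap.sub_apply, ContinuousLinearMap.smul_apply, smul_eq_mul]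
  linarith [d1, d2, main]

lemma integrand_eq {f : ℝ × ℝ → ℝ} (hf : ContDiff ℝ 2 f) (X Y p : ℝ × ℝ) :
    (normalCurv f p X - normalCurv f p Y) *
        (1 + (fderiv ℝ f p X) ^ 2) * (1 + (fderiv ℝ f p Y) ^ 2) *
        Real.sqrt (1 + ((fderiv ℝ f p (1, 0)) ^ 2 + (fderiv ℝ f p (0, 1)) ^ 2)) =
      fderiv ℝ (fderiv ℝ f) p X X * (1 + fderiv ℝ f p Y * fderiv ℝ f p Y) -
        fderiv ℝ (fderiv ℝ f) p Y Y * (1 + fderiv ℝ f p X * fderiv ℝ f p X) := by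
  have hx2 : ∀ V : ℝ × ℝ, fderiv ℝ (fun q => fderiv ℝ f q V) p V =
      fderiv ℝ (fderiv ℝ f) p V V := by
    intro V
    rw [(hasFDerivAt_clm_app hf V p).fderiv]
    rfl
  have hs : (0:ℝ) < Real.sqrt (1 + ((fderiv ℝ f p (1, 0)) ^ 2 + (fderiv ℝ f p (0, 1)) ^ 2)) :=
    Real.sqrt_pos.2 (by positivity)
  have hx : (0:ℝ) < 1 + (fderiv ℝ f p X) ^ 2 := by positivity
  have hy : (0:ℝ) < 1 + (fderiv ℝ f p Y) ^ 2 := by positivity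
  rw [normalCurv, normalCurv, hx2 X, hx2 Y]
  field_simp

lemma exists_polar (q : ℝ × ℝ) (hq : q ≠ 0) :
    ∃ θ : ℝ, (Real.sqrt (q.1 ^ 2 + q.2 ^ 2) * Real.cos θ,
        Real.sqrt (q.1 ^ 2 + q.2 ^ 2) * Real.sin θ) = q := by
  set z : ℂ := ⟨q.1, q.2⟩ with hz
  have hz0 : z ≠ 0 := by
    simp only [ne_eq, Complex.ext_iff, Complex.zero_re, Complex.zero_im, hz]
    intro h
    exact hq (Prod.ext h.1 h.2)
  have habs : ‖z‖ = Real.sqrt (q.1 ^ 2 + q.2 ^ 2) := by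
    rw [Complex.norm_def, Complex.normSq_mk]
    ring_nf
  have habs0 : ‖z‖ ≠ 0 := by
    simpa using hz0
  refine ⟨Complex.arg z, ?_⟩
  rw [← habs, Complex.cos_arg hz0, Complex.sin_arg]
  have h1 : ‖z‖ * (z.re / ‖z‖) = z.re := by field_simp
  have h2 : ‖z‖ * (z.im / ‖z‖) = z.im := by field_simp
  rw [h1, h2]

lemma abs_clm_le (T : ℝ × ℝ →L[ℝ] ℝ) (V : ℝ × ℝ) (hV : V.1 ^ 2 + V.2 ^ 2 = 1) :
    |T V| ≤ 2 * Real.sqrt ((T (1, 0)) ^ 2 + (T (0, 1)) ^ 2) := by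
  have h1 : |T (1, 0)| ≤ Real.sqrt ((T (1, 0)) ^ 2 + (T (0, 1)) ^ 2) := by
    rw [← Real.sqrt_sq_eq_abs]
    exact Real.sqrt_le_sqrt (by nlinarith [sq_nonneg (T (0, 1))])
  have h2 : |T (0, 1)| ≤ Real.sqrt ((T (1, 0)) ^ 2 + (T (0, 1)) ^ 2) := by
    rw [← Real.sqrt_sq_eq_abs]
    exact Real.sqrt_le_sqrt (by nlinarith [sq_nonneg (T (1, 0))])
  have hv1 : |V.1| ≤ 1 := by nlinarith [sq_abs V.1, abs_nonneg V.1, sq_nonneg V.2]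
  have hv2 : |V.2| ≤ 1 := by nlinarith [sq_abs V.2, abs_nonneg V.2, sq_nonneg V.1]
  rw [clm_decomp T V]
  calc |V.1 * T (1, 0) + V.2 * T (0, 1)| ≤ |V.1 * T (1, 0)| + |V.2 * T (0, 1)| := abs_add_le _ _
    _ = |V.1| * |T (1, 0)| + |V.2| * |T (0, 1)| := by rw [abs_mul, abs_mul]
    _ ≤ 2 * Real.sqrt ((T (1, 0)) ^ 2 + (T (0, 1)) ^ 2) := by
        nlinarith [mul_le_mul hv1 h1 (abs_nonneg _) zero_le_one,
          mul_le_mul hv2 h2 (abs_nonneg _) zero_le_one, abs_nonneg (T (1,0)), abs_nonneg (T (0,1))]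

lemma gfun_bound {f : ℝ × ℝ → ℝ} (U V q : ℝ × ℝ) (hU : U.1 ^ 2 + U.2 ^ 2 = 1)
    (hV : V.1 ^ 2 + V.2 ^ 2 = 1) (u : ℝ) (hu0 : 0 ≤ u) (hu4 : u ≤ 4⁻¹)
    (hG : Real.sqrt ((fderiv ℝ f q (1, 0)) ^ 2 + (fderiv ℝ f q (0, 1)) ^ 2) ≤ u) :
    |gfun f U V q| ≤ 4 * u := by
  have ha' : |fderiv ℝ f q U| ≤ 2 * u :=
    le_trans (abs_clm_le (fderiv ℝ f q) U hU) (by linarith)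
  have hb' : |fderiv ℝ f q V| ≤ 2 * u :=
    le_trans (abs_clm_le (fderiv ℝ f q) V hV) (by linarith)
  have hbb : fderiv ℝ f q V * fderiv ℝ f q V ≤ 2 * u * (2 * u) := by
    nlinarith [mul_self_le_mul_self (abs_nonneg (fderiv ℝ f q V)) hb',
      abs_mul_abs_self (fderiv ℝ f q V)]
  rw [gfun, abs_mul, abs_of_pos
    (show (0:ℝ) < 1 + fderiv ℝ f q V * fderiv ℝ f q V by
      nlinarith [mul_self_nonneg (fderiv ℝ f q V)])]
  calc |fderiv ℝ f q U| * (1 + fderiv ℝ f q V * fderiv ℝ f q V)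
      ≤ 2 * u * (1 + 2 * u * (2 * u)) := by
        apply mul_le_mul ha' (by linarith) (by nlinarith [mul_self_nonneg (fderiv ℝ f q V)])
          (by positivity)
    _ ≤ 4 * u := by nlinarith [mul_self_le_mul_self hu0 hu4]

lemma comb_bound (c d g h u : ℝ) (hc : |c| ≤ 1) (hd : |d| ≤ 1) (hg : |g| ≤ 4 * u)
    (hh : |h| ≤ 4 * u) : |c * g - d * h| ≤ 8 * u := by
  have tri : |c * g - d * h| ≤ |c * g| + |d * h| := by
    rw [sub_eq_add_neg]
    exact (abs_add_le _ _).trans (by rw [abs_neg])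
  rw [abs_mul, abs_mul] at tri
  nlinarith [mul_le_mul hc hg (abs_nonneg _) zero_le_one,
    mul_le_mul hd hh (abs_nonneg _) zero_le_one, abs_nonneg g, abs_nonneg h]


theorem integral_curvature_difference_tendsto_zero
    (f : ℝ × ℝ → ℝ) (hf : ContDiff ℝ 2 f)
    (hdecay : ∀ ε > 0, ∃ R : ℝ, ∀ r ≥ R, ∀ θ : ℝ,
      r * Real.sqrt ((fderiv ℝ f (r * Real.cos θ, r * Real.sin θ) (1, 0)) ^ 2 +
        (fderiv ℝ f (r * Real.cos θ, r * Real.sin θ) (0, 1)) ^ 2) < ε)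
    (X Y : ℝ × ℝ) (hX : X.1 ^ 2 + X.2 ^ 2 = 1) (hY : Y.1 ^ 2 + Y.2 ^ 2 = 1) :
    Tendsto (fun r : ℝ => ∫ p in Metric.closedBall (0 : ℝ × ℝ) r,
        (normalCurv f p X - normalCurv f p Y) *
          (1 + (fderiv ℝ f p X) ^ 2) * (1 + (fderiv ℝ f p Y) ^ 2) *
          Real.sqrt (1 + ((fderiv ℝ f p (1, 0)) ^ 2 + (fderiv ℝ f p (0, 1)) ^ 2)))
      atTop (nhds 0) := by
  have hF : ContDiff ℝ 1 (fderiv ℝ f) := hf.fderiv_right (by norm_num)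
  have hContF : Continuous (fderiv ℝ f) := hF.continuous
  have hContF' : Continuous (fderiv ℝ (fderiv ℝ f)) := hF.continuous_fderiv one_ne_zero
  have hcontg : ∀ U V : ℝ × ℝ, Continuous (gfun f U V) := by
    intro U V
    have h1 : Continuous fun p => fderiv ℝ f p U := hContF.clm_apply continuous_const
    have h2 : Continuous fun p => fderiv ℝ f p V := hContF.clm_apply continuous_const
    exact h1.mul (continuous_const.add (h2.mul h2))
  have hcontE : Continuous (fun p : ℝ × ℝ =>
      fderiv ℝ (fderiv ℝ f) p X X * (1 + fderiv ℝ f p Y * fderiv ℝ f p Y) -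
        fderiv ℝ (fderiv ℝ f) p Y Y * (1 + fderiv ℝ f p X * fderiv ℝ f p X)) := by
    have hXX : Continuous fun p => fderiv ℝ (fderiv ℝ f) p X X :=
      (hContF'.clm_apply continuous_const).clm_apply continuous_const
    have hYY : Continuous fun p => fderiv ℝ (fderiv ℝ f) p Y Y :=
      (hContF'.clm_apply continuous_const).clm_apply continuous_const
    have haX : Continuous fun p => fderiv ℝ f p X := hContF.clm_apply continuous_const
    have haY : Continuous fun p => fderiv ℝ f p Y := hContF.clm_apply continuous_const
    exact (hXX.mul (continuous_const.add (haY.mul haY))).sub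
      (hYY.mul (continuous_const.add (haX.mul haX)))
  simp only [integrand_eq hf X Y]
  rw [NormedAddCommGroup.tendsto_nhds_zero]
  intro ε hε
  set ε' : ℝ := min (ε / 65) 4⁻¹ with hε'def
  have hε'pos : 0 < ε' := lt_min (by linarith) (by norm_num)
  have hε'le : ε' ≤ 4⁻¹ := min_le_right _ _
  have hε'ε : 64 * ε' < ε := by
    have h := min_le_left (ε / 65) 4⁻¹
    rw [← hε'def] at h
    linarith
  obtain ⟨R, hR⟩ := hdecay ε' hε'pos
  filter_upwards [eventually_ge_atTop (max R 1)] with r hr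
  have hr1 : (1 : ℝ) ≤ r := le_trans (le_max_right R 1) hr
  have hrR : R ≤ r := le_trans (le_max_left R 1) hr
  have hr0 : (0 : ℝ) < r := by linarith
  -- gradient bound on points at euclidean distance ≥ r
  have hGrad : ∀ q : ℝ × ℝ, r ≤ Real.sqrt (q.1 ^ 2 + q.2 ^ 2) →
      Real.sqrt ((fderiv ℝ f q (1, 0)) ^ 2 + (fderiv ℝ f q (0, 1)) ^ 2) ≤ ε' / r := by
    intro q hq
    set ρ := Real.sqrt (q.1 ^ 2 + q.2 ^ 2) with hρdef
    have hρ0 : 0 < ρ := lt_of_lt_of_le hr0 hq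
    have hq0 : q ≠ 0 := by
      intro h
      rw [h] at hρdef
      simp at hρdef
      rw [hρdef] at hρ0
      exact lt_irrefl _ hρ0
    obtain ⟨θ, hθ⟩ := exists_polar q hq0
    have hmain := hR ρ (le_trans hrR hq) θ
    rw [hθ] at hmain
    have h2 : Real.sqrt ((fderiv ℝ f q (1, 0)) ^ 2 + (fderiv ℝ f q (0, 1)) ^ 2) ≤ ε' / ρ := by
      rw [le_div_iff₀ hρ0, mul_comm]
      exact hmain.le
    exact le_trans h2 (div_le_div_of_nonneg_left hε'pos.le hr0 hq)
  -- bound on gfun at such points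
  have hu0 : (0 : ℝ) ≤ ε' / r := by positivity
  have hu4 : ε' / r ≤ 4⁻¹ := le_trans (div_le_self hε'pos.le hr1) hε'le
  have hgb : ∀ U V : ℝ × ℝ, U.1 ^ 2 + U.2 ^ 2 = 1 → V.1 ^ 2 + V.2 ^ 2 = 1 →
      ∀ q : ℝ × ℝ, r ≤ Real.sqrt (q.1 ^ 2 + q.2 ^ 2) → |gfun f U V q| ≤ 4 * (ε' / r) :=
    fun U V hU hV q hq => gfun_bound U V q hU hV (ε' / r) hu0 hu4 (hGrad q hq)
  -- components of unit vectors
  have hcomp : ∀ V : ℝ × ℝ, V.1 ^ 2 + V.2 ^ 2 = 1 → |V.1| ≤ 1 ∧ |V.2| ≤ 1 := by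
    intro V hV
    exact ⟨by nlinarith [sq_abs V.1, abs_nonneg V.1, sq_nonneg V.2],
      by nlinarith [sq_abs V.2, abs_nonneg V.2, sq_nonneg V.1]⟩
  -- W functions
  set W1 : ℝ × ℝ → ℝ := fun p => X.1 * gfun f X Y p - Y.1 * gfun f Y X p with hW1
  set W2 : ℝ × ℝ → ℝ := fun p => X.2 * gfun f X Y p - Y.2 * gfun f Y X p with hW2
  set W1' : ℝ × ℝ → ℝ × ℝ →L[ℝ] ℝ := fun p => X.1 • gder f X Y p - Y.1 • gder f Y X p with hW1'
  set W2' : ℝ × ℝ → ℝ × ℝ →L[ℝ] ℝ := fun p => X.2 • gder f X Y p - Y.2 • gder f Y X p with hW2'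
  have hdW1 : ∀ p, HasFDerivAt W1 (W1' p) p := fun p =>
    ((hasFDerivAt_gfun hf X Y p).const_mul X.1).sub ((hasFDerivAt_gfun hf Y X p).const_mul Y.1)
  have hdW2 : ∀ p, HasFDerivAt W2 (W2' p) p := fun p =>
    ((hasFDerivAt_gfun hf X Y p).const_mul X.2).sub ((hasFDerivAt_gfun hf Y X p).const_mul Y.2)
  have hdiv : (fun p : ℝ × ℝ => W1' p (1, 0) + W2' p (0, 1)) = fun p : ℝ × ℝ =>
      fderiv ℝ (fderiv ℝ f) p X X * (1 + fderiv ℝ f p Y * fderiv ℝ f p Y) -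
        fderiv ℝ (fderiv ℝ f) p Y Y * (1 + fderiv ℝ f p X * fderiv ℝ f p X) :=
    funext fun p => divergence_identity hf X Y p
  have hle : ((-r, -r) : ℝ × ℝ) ≤ (r, r) := Prod.mk_le_mk.mpr ⟨by linarith, by linarith⟩
  have hball : Metric.closedBall (0 : ℝ × ℝ) r = Set.Icc ((-r, -r) : ℝ × ℝ) (r, r) := by
    have h0 : (0 : ℝ × ℝ) = ((0 : ℝ), (0 : ℝ)) := rfl
    rw [h0, ← closedBall_prod_same, Real.closedBall_eq_Icc, Set.Icc_prod_Icc,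
      zero_sub, zero_add]
  have hIcc : IntegrableOn (fun p : ℝ × ℝ => W1' p (1, 0) + W2' p (0, 1))
      (Set.Icc ((-r, -r) : ℝ × ℝ) (r, r)) := by
    rw [hdiv]
    exact hcontE.continuousOn.integrableOn_compact isCompact_Icc
  have hcW1 : Continuous W1 :=
    (continuous_const.mul (hcontg X Y)).sub (continuous_const.mul (hcontg Y X))
  have hcW2 : Continuous W2 :=
    (continuous_const.mul (hcontg X Y)).sub (continuous_const.mul (hcontg Y X))
  have key := integral_divergence_prod_Icc_of_hasFDerivAt_off_countable_of_le W1 W2 W1' W2'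
    ((-r, -r) : ℝ × ℝ) ((r, r) : ℝ × ℝ) hle ∅ Set.countable_empty hcW1.continuousOn
    hcW2.continuousOn (fun x _ => hdW1 x) (fun x _ => hdW2 x) hIcc
  rw [hball, ← hdiv, key]
  dsimp only
  -- boundary points are at euclidean distance ≥ r
  have hcirc1 : ∀ x : ℝ, r ≤ Real.sqrt (x ^ 2 + r ^ 2) := fun x => by
    calc r = Real.sqrt (r ^ 2) := (Real.sqrt_sq hr0.le).symm
      _ ≤ Real.sqrt (x ^ 2 + r ^ 2) := Real.sqrt_le_sqrt (by nlinarith [sq_nonneg x])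
  have hcirc2 : ∀ x : ℝ, r ≤ Real.sqrt (x ^ 2 + (-r) ^ 2) := fun x => by
    calc r = Real.sqrt (r ^ 2) := (Real.sqrt_sq hr0.le).symm
      _ ≤ Real.sqrt (x ^ 2 + (-r) ^ 2) := Real.sqrt_le_sqrt (by nlinarith [sq_nonneg x])
  have hcirc3 : ∀ y : ℝ, r ≤ Real.sqrt (r ^ 2 + y ^ 2) := fun y => by
    calc r = Real.sqrt (r ^ 2) := (Real.sqrt_sq hr0.le).symm
      _ ≤ Real.sqrt (r ^ 2 + y ^ 2) := Real.sqrt_le_sqrt (by nlinarith [sq_nonneg y])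
  have hcirc4 : ∀ y : ℝ, r ≤ Real.sqrt ((-r) ^ 2 + y ^ 2) := fun y => by
    calc r = Real.sqrt (r ^ 2) := (Real.sqrt_sq hr0.le).symm
      _ ≤ Real.sqrt ((-r) ^ 2 + y ^ 2) := Real.sqrt_le_sqrt (by nlinarith [sq_nonneg y])
  have hWb : ∀ q : ℝ × ℝ, r ≤ Real.sqrt (q.1 ^ 2 + q.2 ^ 2) →
      |W1 q| ≤ 8 * (ε' / r) ∧ |W2 q| ≤ 8 * (ε' / r) := by
    intro q hq
    have g1 := hgb X Y hX hY q hq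
    have g2 := hgb Y X hY hX q hq
    obtain ⟨hX1, hX2⟩ := hcomp X hX
    obtain ⟨hY1, hY2⟩ := hcomp Y hY
    exact ⟨comb_bound _ _ _ _ _ hX1 hY1 g1 g2, comb_bound _ _ _ _ _ hX2 hY2 g1 g2⟩
  have habs2r : |r - (-r)| = 2 * r := by
    rw [show r - (-r) = 2 * r by ring, abs_of_pos (by linarith)]
  have h16 : 8 * (ε' / r) * (2 * r) = 16 * ε' := by field_simp; ring
  have hb1 : ‖∫ x in (-r)..r, W2 (x, r)‖ ≤ 16 * ε' := by
    have := intervalIntegral.norm_integral_le_of_norm_le_const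
      (C := 8 * (ε' / r)) (f := fun x => W2 (x, r)) (a := -r) (b := r)
      (fun x _ => by rw [Real.norm_eq_abs]; exact (hWb (x, r) (hcirc1 x)).2)
    rwa [habs2r, h16] at this
  have hb2 : ‖∫ x in (-r)..r, W2 (x, -r)‖ ≤ 16 * ε' := by
    have := intervalIntegral.norm_integral_le_of_norm_le_const
      (C := 8 * (ε' / r)) (f := fun x => W2 (x, -r)) (a := -r) (b := r)
      (fun x _ => by rw [Real.norm_eq_abs]; exact (hWb (x, -r) (hcirc2 x)).2)
    rwa [habs2r, h16] at this
  have hb3 : ‖∫ y in (-r)..r, W1 (r, y)‖ ≤ 16 * ε' := by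
    have := intervalIntegral.norm_integral_le_of_norm_le_const
      (C := 8 * (ε' / r)) (f := fun y => W1 (r, y)) (a := -r) (b := r)
      (fun y _ => by rw [Real.norm_eq_abs]; exact (hWb (r, y) (hcirc3 y)).1)
    rwa [habs2r, h16] at this
  have hb4 : ‖∫ y in (-r)..r, W1 (-r, y)‖ ≤ 16 * ε' := by
    have := intervalIntegral.norm_integral_le_of_norm_le_const
      (C := 8 * (ε' / r)) (f := fun y => W1 (-r, y)) (a := -r) (b := r)
      (fun y _ => by rw [Real.norm_eq_abs]; exact (hWb (-r, y) (hcirc4 y)).1)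
    rwa [habs2r, h16] at this
  set I1 := ∫ x in (-r)..r, W2 (x, r)
  set I2 := ∫ x in (-r)..r, W2 (x, -r)
  set I3 := ∫ y in (-r)..r, W1 (r, y)
  set I4 := ∫ y in (-r)..r, W1 (-r, y)
  have : ‖I1 - I2 + I3 - I4‖ ≤ 64 * ε' := by
    have t1 := norm_sub_le (I1 - I2 + I3) I4
    have t2 := norm_add_le (I1 - I2) I3
    have t3 := norm_sub_le I1 I2
    linarith
  linarith
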